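/- Let q be a real number with 0 < q and q ≠ 1, let k be an even positive integer, and let n ≥ 0 be an integer. Then 𝓔_{n,q} − 𝓔_{n,q}(k) = [2]_q ∑_{l=0}^{k−1} (−1)^l [l]_q^n (with the convention [0]_q^0 = 1). -/

import Mathlib

/-- The modified `q`-Euler polynomials
`𝓔_{n,q}(x) = [2]_q (1/(1-q))^n ∑_{l=0}^n C(n,l) (-1)^l q^{lx}/(1+q^l)`
(here `q ^ ((l : ℝ) * x)` is the real power `rpow`). -/
noncomputable def modqEulerPoly (q : ℝ) (n : ℕ) (x : ℝ) : ℝ :=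
  (1 + q) * (1 / (1 - q)) ^ n *
    ∑ l ∈ Finset.range (n + 1),
      (n.choose l : ℝ) * (-1) ^ l * q ^ ((l : ℝ) * x) / (1 + q ^ l)

/-- For even positive `k`:
`𝓔_{n,q} - 𝓔_{n,q}(k) = [2]_q ∑_{l=0}^{k-1} (-1)^l [l]_q^n`. -/
theorem modqEuler_even_sum (q : ℝ) (hq0 : 0 < q) (hq1 : q ≠ 1)
    (k : ℕ) (hk : 0 < k) (hke : Even k) (n : ℕ) :
    modqEulerPoly q n 0 - modqEulerPoly q n (k : ℝ) =
      (1 + q) * ∑ l ∈ Finset.range k, (-1) ^ l * ((1 - q ^ l) / (1 - q)) ^ n := by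
  have hrp : ∀ l : ℕ, q ^ ((l : ℝ) * (k : ℝ)) = (q ^ l) ^ k := by
    intro l
    rw [← pow_mul, ← Real.rpow_natCast q (l * k)]
    push_cast
    ring_nf
  unfold modqEulerPoly
  simp only [mul_zero, Real.rpow_zero, hrp]
  rw [← mul_sub, ← Finset.sum_sub_distrib]
  have key : ∀ l ∈ Finset.range (n + 1),
      (n.choose l : ℝ) * (-1) ^ l * 1 / (1 + q ^ l) -
        (n.choose l : ℝ) * (-1) ^ l * (q ^ l) ^ k / (1 + q ^ l)
      = ∑ m ∈ Finset.range k, (-1) ^ m * ((n.choose l : ℝ) * ((-(q ^ m)) ^ l)) := by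
    intro l _
    have hql : (0:ℝ) < q ^ l := pow_pos hq0 l
    have hx : (-(q ^ l) : ℝ) ≠ 1 := by nlinarith
    have hg := geom_sum_eq hx k
    have hsum : ∑ m ∈ Finset.range k, (-1:ℝ) ^ m * ((n.choose l : ℝ) * ((-(q ^ m)) ^ l))
        = (n.choose l : ℝ) * (-1) ^ l * ∑ m ∈ Finset.range k, (-(q ^ l)) ^ m := by
      rw [Finset.mul_sum]
      refine Finset.sum_congr rfl fun m _ => ?_
      rw [neg_pow (q ^ m) l, neg_pow (q ^ l) m, ← pow_mul, ← pow_mul, Nat.mul_comm]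
      ring
    rw [hsum, hg, hke.neg_pow]
    have hd : (-q ^ l - 1 : ℝ) ≠ 0 := by nlinarith
    have hd' : (1 + q ^ l : ℝ) ≠ 0 := by positivity
    field_simp [hd, hd']
    ring
  rw [Finset.sum_congr rfl key, Finset.sum_comm, Finset.mul_sum, Finset.mul_sum]
  refine Finset.sum_congr rfl fun m _ => ?_
  have hbin : ∑ l ∈ Finset.range (n + 1), (n.choose l : ℝ) * ((-(q ^ m)) ^ l)
      = (1 - q ^ m) ^ n := by
    have := add_pow (-(q ^ m) : ℝ) 1 n
    rw [show (-(q ^ m) + 1 : ℝ) = 1 - q ^ m by ring] at this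
    rw [this]
    refine Finset.sum_congr rfl fun l _ => ?_
    ring
  rw [← Finset.mul_sum, hbin, div_pow]
  field_simp
  have h1q : (1 - q : ℝ) ≠ 0 := sub_ne_zero.mpr (Ne.symm hq1)
  rw [one_pow, one_mul, ← mul_pow]
  congr 1
  field_simp
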